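/- For every finite simple graph G, the c-rank of G equals the height of the lattice of flats of G. -/

import Mathlib

/-- `St(W)`: the set of vertices adjacent to every vertex of `W` (so `St(∅) = V`). -/
def starW {V : Type*} (G : SimpleGraph V) (W : Set V) : Set V := {v | ∀ w ∈ W, G.Adj v w}

/-- The flats of `G`: all sets of the form `St(W)`, `W ⊆ V`. -/
def flats {V : Type*} (G : SimpleGraph V) : Set (Set V) := {X | ∃ W : Set V, X = starW G W}

/-- Height of a family of sets: the largest `k` admitting a strictly decreasing chain
`X₀ ⊃ X₁ ⊃ … ⊃ X_k` inside the family. -/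
noncomputable def heightOf {V : Type*} (F : Set (Set V)) : ℕ :=
  sSup {k | ∃ c : Fin (k + 1) → Set V, StrictAnti c ∧ ∀ i, c i ∈ F}

/-- The c-rank of a graph: the height of its lattice of flats. -/
noncomputable def crk {V : Type*} (G : SimpleGraph V) : ℕ := heightOf (flats G)

/-- `J` has a witness in `A_G^c`: there is an equal-size row set such that the corresponding
submatrix of the complemented adjacency matrix can be put in lower unitriangular form
(1's on the diagonal, 0's above) by independently permuting rows and columns. -/
def hasWitness {V : Type*} (G : SimpleGraph V) (J : Finset V) : Prop :=
  ∃ i : Fin J.card → V, ∃ j : Fin J.card → V,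
    Function.Injective i ∧ Function.Injective j ∧ (∀ r, j r ∈ J) ∧
    (∀ r, ¬ G.Adj (i r) (j r)) ∧ (∀ r s, r < s → G.Adj (i r) (j s))

/-- The c-rank of `G` defined via witnesses: maximum size of a vertex subset with a witness. -/
noncomputable def crkW {V : Type*} (G : SimpleGraph V) : ℕ :=
  sSup {k | ∃ J : Finset V, J.card = k ∧ hasWitness G J}

/-- For every finite simple graph `G`, the c-rank of `G` (maximum size of a vertex subset
admitting a witness in `A^c`) equals the height of the lattice of flats of `G`. -/
lemma starW_antitone {V : Type*} (G : SimpleGraph V) : Antitone (starW G) :=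
  fun _ _ h _ hv w hw => hv w (h hw)

lemma subset_starW_starW {V : Type*} (G : SimpleGraph V) (W : Set V) :
    W ⊆ starW G (starW G W) := fun w hw _ hv => (hv w hw).symm

lemma starW_starW_starW {V : Type*} (G : SimpleGraph V) (W : Set V) :
    starW G (starW G (starW G W)) = starW G W :=
  le_antisymm (starW_antitone G (subset_starW_starW G W)) (subset_starW_starW G (starW G W))

theorem crkW_eq_height_flats {V : Type*} [Fintype V] (G : SimpleGraph V) :
    crkW G = heightOf (flats G) := by
  classical
  unfold crkW heightOf
  congr 1
  ext k
  constructor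
  · -- witness of size k gives a chain of length k
    rintro ⟨J, hJ, ii, jj, hi, hj, hjJ, hdiag, hupper⟩
    subst hJ
    refine ⟨fun t => starW G (jj '' {s : Fin J.card | J.card ≤ (s : ℕ) + (t : ℕ)}), ?_,
      fun t => ⟨_, rfl⟩⟩
    intro t t' htt'
    have htt'n : (t : ℕ) < (t' : ℕ) := htt'
    have hsub : starW G (jj '' {s : Fin J.card | J.card ≤ (s : ℕ) + (t' : ℕ)}) ⊆
        starW G (jj '' {s : Fin J.card | J.card ≤ (s : ℕ) + (t : ℕ)}) := by
      apply starW_antitone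
      apply Set.image_mono
      intro s hs
      simp only [Set.mem_setOf_eq] at *
      omega
    have htn : (t : ℕ) < J.card := by
      have := t'.is_le
      omega
    show starW G (jj '' {s : Fin J.card | J.card ≤ (s : ℕ) + (t' : ℕ)}) <
      starW G (jj '' {s : Fin J.card | J.card ≤ (s : ℕ) + (t : ℕ)})
    rw [lt_iff_le_and_ne]
    refine ⟨hsub, ?_⟩
    intro heq
    set r : Fin J.card := ⟨J.card - 1 - (t : ℕ), by omega⟩ with hr
    have hx : ii r ∈ starW G (jj '' {s : Fin J.card | J.card ≤ (s : ℕ) + (t : ℕ)}) := by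
      rintro w ⟨s, hs, rfl⟩
      simp only [Set.mem_setOf_eq] at hs
      apply hupper
      show (r : ℕ) < (s : ℕ)
      simp only [hr]
      have := s.isLt
      omega
    rw [← heq] at hx
    have hmem : jj r ∈ jj '' {s : Fin J.card | J.card ≤ (s : ℕ) + (t' : ℕ)} := by
      refine ⟨r, ?_, rfl⟩
      simp only [Set.mem_setOf_eq, hr]
      omega
    exact hdiag r (hx (jj r) hmem)
  · -- chain of length k gives witness of size k
    rintro ⟨c, hanti, hflat⟩
    have hclosed : ∀ t, starW G (starW G (c t)) = c t := by
      intro t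
      obtain ⟨W, hW⟩ := hflat t
      rw [hW, starW_starW_starW]
    have h1 : ∀ t : Fin k, ∃ x, x ∈ c t.castSucc ∧ x ∉ c t.succ := by
      intro t
      obtain ⟨x, hx1, hx2⟩ := Set.exists_of_ssubset (hanti (Fin.castSucc_lt_succ : t.castSucc < t.succ))
      exact ⟨x, hx1, hx2⟩
    choose a ha1 ha2 using h1
    have h2 : ∀ t : Fin k, ∃ w, w ∈ starW G (c t.succ) ∧ ¬ G.Adj (a t) w := by
      intro t
      by_contra h
      push_neg at h
      exact ha2 t (by rw [← hclosed t.succ]; exact fun w hw => h w hw)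
    choose b hb1 hb2 using h2
    have hmono : ∀ (t t' : Fin k), (t : ℕ) < (t' : ℕ) → c t'.castSucc ⊆ c t.succ := by
      intro t t' h
      apply hanti.antitone
      show (t : ℕ) + 1 ≤ (t' : ℕ)
      omega
    have key : ∀ r s : Fin k, (s : ℕ) < (r : ℕ) → G.Adj (a r) (b s) := by
      intro r s hsr
      have : a r ∈ c s.succ := hmono s r hsr (ha1 r)
      exact ((hb1 s) (a r) this).symm
    have hainj : Function.Injective a := by
      intro t t' h
      by_contra hne
      have hne' : (t : ℕ) ≠ (t' : ℕ) := fun hh => hne (Fin.ext hh)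
      rcases lt_or_gt_of_ne hne' with hlt | hlt
      · exact ha2 t (by rw [h]; exact hmono t t' hlt (ha1 t'))
      · exact ha2 t' (by rw [← h]; exact hmono t' t hlt (ha1 t))
    have hbinj : Function.Injective b := by
      intro t t' h
      by_contra hne
      have hne' : (t : ℕ) ≠ (t' : ℕ) := fun hh => hne (Fin.ext hh)
      rcases lt_or_gt_of_ne hne' with hlt | hlt
      · exact hb2 t' (h ▸ key t' t hlt)
      · exact hb2 t (h.symm ▸ key t t' hlt)
    have hcard : (Finset.image b Finset.univ).card = k := by
      rw [Finset.card_image_of_injective _ hbinj, Finset.card_univ, Fintype.card_fin]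
    refine ⟨Finset.image b Finset.univ, hcard,
      fun r => a ((Fin.cast hcard r).rev), fun r => b ((Fin.cast hcard r).rev),
      ?_, ?_, ?_, ?_, ?_⟩
    · exact hainj.comp (Fin.rev_injective.comp (Fin.cast_injective _))
    · exact hbinj.comp (Fin.rev_injective.comp (Fin.cast_injective _))
    · intro r
      exact Finset.mem_image_of_mem b (Finset.mem_univ _)
    · intro r
      exact hb2 _
    · intro r s hrs
      apply key
      have : (Fin.cast hcard s).rev < (Fin.cast hcard r).rev := by
        rw [Fin.rev_lt_rev]
        exact hrs
      exact this
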